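/- Work in the polynomial ring S = ℂ[x₁, x₃, x₇, y₀, y₁, …, y₇] graded by ℤ⁸ with the E₈ weights. The invariant ring Sᵀ (the ℂ-subalgebra of polynomials each of whose monomials has weight 0) equals the ℂ-subalgebra generated by the three monomials Z₁ = x₁ y₀¹⁵ y₁⁸ y₂¹⁰ y₃⁵ y₄¹² y₅⁹ y₆⁶ y₇³, Z₂ = x₇ y₀⁶ y₁³ y₂⁴ y₃² y₄⁵ y₅⁴ y₆³ y₇², Z₃ = x₃ y₀¹⁰ y₁⁵ y₂⁷ y₃⁴ y₄⁸ y₅⁶ y₆⁴ y₇², and these three monomials are algebraically independent over ℂ; hence Sᵀ is isomorphic to the polynomial ring ℂ[Z₁, Z₂, Z₃]. -/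
import Mathlib

open MvPolynomial

/-- The subalgebra of an `Fin n`-multigraded polynomial ring consisting of the polynomials
all of whose monomials have weight zero (the ring of invariants of the torus action
with weights `w`). -/
noncomputable def invariants {m n : ℕ} (w : Fin m → Fin n → ℤ) :
    Subalgebra ℂ (MvPolynomial (Fin m) ℂ) where
  carrier := {p | ∀ d ∈ p.support, ∀ i : Fin n, ∑ v, (d v : ℤ) * w v i = 0}
  zero_mem' := by
    intro d hd i
    simp at hd
  one_mem' := by
    intro d hd i
    have hd' : d = 0 := by
      by_contra h
      have := MvPolynomial.mem_support_iff.mp hd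
      rw [show (1 : MvPolynomial (Fin m) ℂ) = C 1 from (map_one C).symm,
        MvPolynomial.coeff_C, if_neg (Ne.symm h)] at this
      exact this rfl
    subst hd'
    simp
  add_mem' := by
    intro p q hp hq d hd i
    rcases Finset.mem_union.mp (MvPolynomial.support_add hd) with h | h
    · exact hp d h i
    · exact hq d h i
  mul_mem' := by
    intro p q hp hq d hd i
    obtain ⟨a, ha, b, hb, rfl⟩ := Finset.mem_add.mp (MvPolynomial.support_mul p q hd)
    have key : ∀ v : Fin m, (((a + b) v : ℤ)) * w v i
        = (a v : ℤ) * w v i + (b v : ℤ) * w v i := by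
      intro v
      rw [Finsupp.add_apply]
      push_cast
      ring
    rw [Finset.sum_congr rfl fun v _ => key v, Finset.sum_add_distrib,
      hp a ha i, hq b hb i, add_zero]
  algebraMap_mem' := by
    intro r d hd i
    have hd' : d = 0 := by
      by_contra h
      have := MvPolynomial.mem_support_iff.mp hd
      rw [MvPolynomial.algebraMap_eq, MvPolynomial.coeff_C, if_neg (Ne.symm h)] at this
      exact this rfl
    subst hd'
    simp

open MvPolynomial

/-- Weights of the torus action for the `E₈` singularity: the variables of
`S = ℂ[x₁, x₃, x₇, y₀, …, y₇]` are indexed by `Fin 11` with `0 ↦ x₁`, `1 ↦ x₃`,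
`2 ↦ x₇`, `3+m ↦ y_m`; the rows below are `w(x₁) = e₁`, `w(x₃) = e₃`, `w(x₇) = e₇`,
`w(y₀) = -2e₀+e₁+e₂+e₄`, `w(y₁) = e₀-2e₁`, `w(y₂) = e₀-2e₂+e₃`, `w(y₃) = e₂-2e₃`,
`w(y₄) = e₀-2e₄+e₅`, `w(y₅) = e₄-2e₅+e₆`, `w(y₆) = e₅-2e₆+e₇`, `w(y₇) = e₆-2e₇`. -/
def wE8 : Fin 11 → Fin 8 → ℤ :=
  ![![0, 1, 0, 0, 0, 0, 0, 0],
    ![0, 0, 0, 1, 0, 0, 0, 0],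
    ![0, 0, 0, 0, 0, 0, 0, 1],
    ![-2, 1, 1, 0, 1, 0, 0, 0],
    ![1, -2, 0, 0, 0, 0, 0, 0],
    ![1, 0, -2, 1, 0, 0, 0, 0],
    ![0, 0, 1, -2, 0, 0, 0, 0],
    ![1, 0, 0, 0, -2, 1, 0, 0],
    ![0, 0, 0, 0, 1, -2, 1, 0],
    ![0, 0, 0, 0, 0, 1, -2, 1],
    ![0, 0, 0, 0, 0, 0, 1, -2]]

/-- `Z₁ = x₁ y₀¹⁵ y₁⁸ y₂¹⁰ y₃⁵ y₄¹² y₅⁹ y₆⁶ y₇³`. -/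
noncomputable def E8Z₁ : MvPolynomial (Fin 11) ℂ :=
  X 0 * X 3 ^ 15 * X 4 ^ 8 * X 5 ^ 10 * X 6 ^ 5 * X 7 ^ 12 * X 8 ^ 9 * X 9 ^ 6 * X 10 ^ 3

/-- `Z₂ = x₇ y₀⁶ y₁³ y₂⁴ y₃² y₄⁵ y₅⁴ y₆³ y₇²`. -/
noncomputable def E8Z₂ : MvPolynomial (Fin 11) ℂ :=
  X 2 * X 3 ^ 6 * X 4 ^ 3 * X 5 ^ 4 * X 6 ^ 2 * X 7 ^ 5 * X 8 ^ 4 * X 9 ^ 3 * X 10 ^ 2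

/-- `Z₃ = x₃ y₀¹⁰ y₁⁵ y₂⁷ y₃⁴ y₄⁸ y₅⁶ y₆⁴ y₇²`. -/
noncomputable def E8Z₃ : MvPolynomial (Fin 11) ℂ :=
  X 1 * X 3 ^ 10 * X 4 ^ 5 * X 5 ^ 7 * X 6 ^ 4 * X 7 ^ 8 * X 8 ^ 6 * X 9 ^ 4 * X 10 ^ 2


section AuxE8

open Finsupp

lemma sum_univ_eleven {M : Type*} [AddCommMonoid M] (f : Fin 11 → M) :
    ∑ i, f i = f 0 + f 1 + f 2 + f 3 + f 4 + f 5 + f 6 + f 7 + f 8 + f 9 + f 10 := by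
  rw [Fin.sum_univ_castSucc, Fin.sum_univ_castSucc, Fin.sum_univ_castSucc, Fin.sum_univ_eight]
  rfl

/-- The exponent multidegree of `Z₁`. -/
noncomputable def E8D₁ : Fin 11 →₀ ℕ :=
  single 0 1 + single 3 15 + single 4 8 + single 5 10 + single 6 5 + single 7 12 +
  single 8 9 + single 9 6 + single 10 3

/-- The exponent multidegree of `Z₂`. -/
noncomputable def E8D₂ : Fin 11 →₀ ℕ :=
  single 2 1 + single 3 6 + single 4 3 + single 5 4 + single 6 2 + single 7 5 +
  single 8 4 + single 9 3 + single 10 2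

/-- The exponent multidegree of `Z₃`. -/
noncomputable def E8D₃ : Fin 11 →₀ ℕ :=
  single 1 1 + single 3 10 + single 4 5 + single 5 7 + single 6 4 + single 7 8 +
  single 8 6 + single 9 4 + single 10 2

lemma E8Z₁_eq : E8Z₁ = monomial E8D₁ 1 := by
  simp only [E8Z₁, E8D₁, X, monomial_pow, monomial_mul, one_pow, mul_one, one_mul,
    Finsupp.smul_single, smul_eq_mul]

lemma E8Z₂_eq : E8Z₂ = monomial E8D₂ 1 := by
  simp only [E8Z₂, E8D₂, X, monomial_pow, monomial_mul, one_pow, mul_one, one_mul,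
    Finsupp.smul_single, smul_eq_mul]

lemma E8Z₃_eq : E8Z₃ = monomial E8D₃ 1 := by
  simp only [E8Z₃, E8D₃, X, monomial_pow, monomial_mul, one_pow, mul_one, one_mul,
    Finsupp.smul_single, smul_eq_mul]

lemma mem_invariants_iff {m n : ℕ} (w : Fin m → Fin n → ℤ) (p : MvPolynomial (Fin m) ℂ) :
    p ∈ invariants w ↔ ∀ d ∈ p.support, ∀ i : Fin n, ∑ v, (d v : ℤ) * w v i = 0 :=
  Iff.rfl

/-- Expand the eight weight-zero conditions into explicit linear equations. -/
lemma weight_eqs (d : Fin 11 →₀ ℕ) (h : ∀ i : Fin 8, ∑ v, (d v : ℤ) * wE8 v i = 0) :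
    ((d 0 : ℤ) * 0 + d 1 * 0 + d 2 * 0 + d 3 * (-2) + d 4 * 1 + d 5 * 1 + d 6 * 0
      + d 7 * 1 + d 8 * 0 + d 9 * 0 + d 10 * 0 = 0) ∧
    ((d 0 : ℤ) * 1 + d 1 * 0 + d 2 * 0 + d 3 * 1 + d 4 * (-2) + d 5 * 0 + d 6 * 0
      + d 7 * 0 + d 8 * 0 + d 9 * 0 + d 10 * 0 = 0) ∧
    ((d 0 : ℤ) * 0 + d 1 * 0 + d 2 * 0 + d 3 * 1 + d 4 * 0 + d 5 * (-2) + d 6 * 1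
      + d 7 * 0 + d 8 * 0 + d 9 * 0 + d 10 * 0 = 0) ∧
    ((d 0 : ℤ) * 0 + d 1 * 1 + d 2 * 0 + d 3 * 0 + d 4 * 0 + d 5 * 1 + d 6 * (-2)
      + d 7 * 0 + d 8 * 0 + d 9 * 0 + d 10 * 0 = 0) ∧
    ((d 0 : ℤ) * 0 + d 1 * 0 + d 2 * 0 + d 3 * 1 + d 4 * 0 + d 5 * 0 + d 6 * 0
      + d 7 * (-2) + d 8 * 1 + d 9 * 0 + d 10 * 0 = 0) ∧
    ((d 0 : ℤ) * 0 + d 1 * 0 + d 2 * 0 + d 3 * 0 + d 4 * 0 + d 5 * 0 + d 6 * 0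
      + d 7 * 1 + d 8 * (-2) + d 9 * 1 + d 10 * 0 = 0) ∧
    ((d 0 : ℤ) * 0 + d 1 * 0 + d 2 * 0 + d 3 * 0 + d 4 * 0 + d 5 * 0 + d 6 * 0
      + d 7 * 0 + d 8 * 1 + d 9 * (-2) + d 10 * 1 = 0) ∧
    ((d 0 : ℤ) * 0 + d 1 * 0 + d 2 * 1 + d 3 * 0 + d 4 * 0 + d 5 * 0 + d 6 * 0
      + d 7 * 0 + d 8 * 0 + d 9 * 1 + d 10 * (-2) = 0) := by
  have h' : ∀ i : Fin 8, (d 0 : ℤ) * wE8 0 i + d 1 * wE8 1 i + d 2 * wE8 2 i + d 3 * wE8 3 i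
      + d 4 * wE8 4 i + d 5 * wE8 5 i + d 6 * wE8 6 i + d 7 * wE8 7 i + d 8 * wE8 8 i
      + d 9 * wE8 9 i + d 10 * wE8 10 i = 0 := by
    intro i; have := h i; rwa [sum_univ_eleven] at this
  exact ⟨h' 0, h' 1, h' 2, h' 3, h' 4, h' 5, h' 6, h' 7⟩

/-- The E₈ intersection matrix is unimodular, so a weight-zero exponent vector is
determined by its first three coordinates: it is the corresponding combination of the
exponents of `Z₁, Z₂, Z₃`. -/
lemma exponent_decomp (d : Fin 11 →₀ ℕ) (h : ∀ i : Fin 8, ∑ v, (d v : ℤ) * wE8 v i = 0) :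
    d = d 0 • E8D₁ + d 2 • E8D₂ + d 1 • E8D₃ := by
  obtain ⟨h0, h1, h2, h3, h4, h5, h6, h7⟩ := weight_eqs d h
  ext j
  fin_cases j <;>
    simp [E8D₁, E8D₂, E8D₃, Finsupp.single_apply] <;> omega

lemma weight_zero₁ : ∀ i : Fin 8, ∑ v, (E8D₁ v : ℤ) * wE8 v i = 0 := by
  have h0 : E8D₁ 0 = 1 := by simp [E8D₁, Finsupp.single_apply]
  have h1 : E8D₁ 1 = 0 := by simp [E8D₁, Finsupp.single_apply]
  have h2 : E8D₁ 2 = 0 := by simp [E8D₁, Finsupp.single_apply]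
  have h3 : E8D₁ 3 = 15 := by simp [E8D₁, Finsupp.single_apply]
  have h4 : E8D₁ 4 = 8 := by simp [E8D₁, Finsupp.single_apply]
  have h5 : E8D₁ 5 = 10 := by simp [E8D₁, Finsupp.single_apply]
  have h6 : E8D₁ 6 = 5 := by simp [E8D₁, Finsupp.single_apply]
  have h7 : E8D₁ 7 = 12 := by simp [E8D₁, Finsupp.single_apply]
  have h8 : E8D₁ 8 = 9 := by simp [E8D₁, Finsupp.single_apply]
  have h9 : E8D₁ 9 = 6 := by simp [E8D₁, Finsupp.single_apply]
  have h10 : E8D₁ 10 = 3 := by simp [E8D₁, Finsupp.single_apply]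
  intro i
  rw [sum_univ_eleven, h0, h1, h2, h3, h4, h5, h6, h7, h8, h9, h10]
  revert i
  decide

lemma weight_zero₂ : ∀ i : Fin 8, ∑ v, (E8D₂ v : ℤ) * wE8 v i = 0 := by
  have h0 : E8D₂ 0 = 0 := by simp [E8D₂, Finsupp.single_apply]
  have h1 : E8D₂ 1 = 0 := by simp [E8D₂, Finsupp.single_apply]
  have h2 : E8D₂ 2 = 1 := by simp [E8D₂, Finsupp.single_apply]
  have h3 : E8D₂ 3 = 6 := by simp [E8D₂, Finsupp.single_apply]
  have h4 : E8D₂ 4 = 3 := by simp [E8D₂, Finsupp.single_apply]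
  have h5 : E8D₂ 5 = 4 := by simp [E8D₂, Finsupp.single_apply]
  have h6 : E8D₂ 6 = 2 := by simp [E8D₂, Finsupp.single_apply]
  have h7 : E8D₂ 7 = 5 := by simp [E8D₂, Finsupp.single_apply]
  have h8 : E8D₂ 8 = 4 := by simp [E8D₂, Finsupp.single_apply]
  have h9 : E8D₂ 9 = 3 := by simp [E8D₂, Finsupp.single_apply]
  have h10 : E8D₂ 10 = 2 := by simp [E8D₂, Finsupp.single_apply]
  intro i
  rw [sum_univ_eleven, h0, h1, h2, h3, h4, h5, h6, h7, h8, h9, h10]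
  revert i
  decide

lemma weight_zero₃ : ∀ i : Fin 8, ∑ v, (E8D₃ v : ℤ) * wE8 v i = 0 := by
  have h0 : E8D₃ 0 = 0 := by simp [E8D₃, Finsupp.single_apply]
  have h1 : E8D₃ 1 = 1 := by simp [E8D₃, Finsupp.single_apply]
  have h2 : E8D₃ 2 = 0 := by simp [E8D₃, Finsupp.single_apply]
  have h3 : E8D₃ 3 = 10 := by simp [E8D₃, Finsupp.single_apply]
  have h4 : E8D₃ 4 = 5 := by simp [E8D₃, Finsupp.single_apply]
  have h5 : E8D₃ 5 = 7 := by simp [E8D₃, Finsupp.single_apply]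
  have h6 : E8D₃ 6 = 4 := by simp [E8D₃, Finsupp.single_apply]
  have h7 : E8D₃ 7 = 8 := by simp [E8D₃, Finsupp.single_apply]
  have h8 : E8D₃ 8 = 6 := by simp [E8D₃, Finsupp.single_apply]
  have h9 : E8D₃ 9 = 4 := by simp [E8D₃, Finsupp.single_apply]
  have h10 : E8D₃ 10 = 2 := by simp [E8D₃, Finsupp.single_apply]
  intro i
  rw [sum_univ_eleven, h0, h1, h2, h3, h4, h5, h6, h7, h8, h9, h10]
  revert i
  decide

lemma monomial_mem_invariants (D : Fin 11 →₀ ℕ)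
    (hD : ∀ i : Fin 8, ∑ v, (D v : ℤ) * wE8 v i = 0) (c : ℂ) :
    monomial D c ∈ invariants wE8 := by
  rw [mem_invariants_iff]
  intro d hd i
  rcases eq_or_ne c 0 with rfl | hc
  · simp at hd
  · rw [support_monomial, if_neg hc, Finset.mem_singleton] at hd
    subst hd
    exact hD i

lemma monomial_mem_adjoin (d : Fin 11 →₀ ℕ)
    (h : ∀ i : Fin 8, ∑ v, (d v : ℤ) * wE8 v i = 0) (c : ℂ) :
    monomial d c ∈ Algebra.adjoin ℂ {E8Z₁, E8Z₂, E8Z₃} := by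
  have hdec := exponent_decomp d h
  have hrw : monomial d c = C c * E8Z₁ ^ d 0 * E8Z₂ ^ d 2 * E8Z₃ ^ d 1 := by
    rw [E8Z₁_eq, E8Z₂_eq, E8Z₃_eq, monomial_pow, monomial_pow, monomial_pow,
      one_pow, one_pow, one_pow, C_mul_monomial, monomial_mul, monomial_mul,
      mul_one, mul_one, mul_one, ← hdec]
  rw [hrw]
  have hC : (C c : MvPolynomial (Fin 11) ℂ) ∈ Algebra.adjoin ℂ {E8Z₁, E8Z₂, E8Z₃} := by
    rw [← MvPolynomial.algebraMap_eq]
    exact Subalgebra.algebraMap_mem _ c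
  exact mul_mem (mul_mem (mul_mem hC
    (pow_mem (Algebra.subset_adjoin (by simp)) _))
    (pow_mem (Algebra.subset_adjoin (by simp)) _))
    (pow_mem (Algebra.subset_adjoin (by simp)) _)

lemma invariants_eq_adjoin : invariants wE8 = Algebra.adjoin ℂ {E8Z₁, E8Z₂, E8Z₃} := by
  apply le_antisymm
  · intro p hp
    rw [mem_invariants_iff] at hp
    rw [p.as_sum]
    exact Subalgebra.sum_mem _ fun d hd => monomial_mem_adjoin d (hp d hd) _
  · rw [Algebra.adjoin_le_iff]
    intro z hz
    simp only [Set.mem_insert_iff, Set.mem_singleton_iff] at hz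
    rcases hz with rfl | rfl | rfl
    · rw [E8Z₁_eq]; exact monomial_mem_invariants _ weight_zero₁ _
    · rw [E8Z₂_eq]; exact monomial_mem_invariants _ weight_zero₂ _
    · rw [E8Z₃_eq]; exact monomial_mem_invariants _ weight_zero₃ _

lemma E8_algebraicIndependent : AlgebraicIndependent ℂ ![E8Z₁, E8Z₂, E8Z₃] := by
  rw [algebraicIndependent_iff_injective_aeval]
  have hcomp : (aeval (![X 0, X 2, X 1, 1, 1, 1, 1, 1, 1, 1, 1] :
        Fin 11 → MvPolynomial (Fin 3) ℂ)).comp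
      (aeval (![E8Z₁, E8Z₂, E8Z₃] : Fin 3 → MvPolynomial (Fin 11) ℂ))
      = AlgHom.id ℂ (MvPolynomial (Fin 3) ℂ) := by
    apply MvPolynomial.algHom_ext
    intro i
    have g5 : (![X 0, X 2, X 1, 1, 1, 1, 1, 1, 1, 1, 1] : Fin 11 → MvPolynomial (Fin 3) ℂ) 5
        = 1 := rfl
    have g6 : (![X 0, X 2, X 1, 1, 1, 1, 1, 1, 1, 1, 1] : Fin 11 → MvPolynomial (Fin 3) ℂ) 6
        = 1 := rfl
    have g7 : (![X 0, X 2, X 1, 1, 1, 1, 1, 1, 1, 1, 1] : Fin 11 → MvPolynomial (Fin 3) ℂ) 7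
        = 1 := rfl
    have g8 : (![X 0, X 2, X 1, 1, 1, 1, 1, 1, 1, 1, 1] : Fin 11 → MvPolynomial (Fin 3) ℂ) 8
        = 1 := rfl
    have g9 : (![X 0, X 2, X 1, 1, 1, 1, 1, 1, 1, 1, 1] : Fin 11 → MvPolynomial (Fin 3) ℂ) 9
        = 1 := rfl
    have g10 : (![X 0, X 2, X 1, 1, 1, 1, 1, 1, 1, 1, 1] : Fin 11 → MvPolynomial (Fin 3) ℂ) 10
        = 1 := rfl
    fin_cases i <;>
      simp [E8Z₁, E8Z₂, E8Z₃, aeval_X, g5, g6, g7, g8, g9, g10]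
  intro a b hab
  have hcast := congrArg (aeval (![X 0, X 2, X 1, 1, 1, 1, 1, 1, 1, 1, 1] :
      Fin 11 → MvPolynomial (Fin 3) ℂ)) hab
  have ha := AlgHom.congr_fun hcomp a
  have hb := AlgHom.congr_fun hcomp b
  simp only [AlgHom.coe_comp, Function.comp_apply, AlgHom.coe_id, id_eq] at ha hb
  rw [ha, hb] at hcast
  exact hcast

end AuxE8

/-- the ring of invariants of the `E₈` torus action on `S` is generated,
as a `ℂ`-subalgebra, by the three monomials `Z₁, Z₂, Z₃`, which are algebraically
independent over `ℂ`; hence the invariant ring is isomorphic to the polynomial ring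
`ℂ[Z₁, Z₂, Z₃]`. -/
theorem statement16 :
    invariants wE8 = Algebra.adjoin ℂ {E8Z₁, E8Z₂, E8Z₃} ∧
    AlgebraicIndependent ℂ ![E8Z₁, E8Z₂, E8Z₃] ∧
    Nonempty ((invariants wE8) ≃ₐ[ℂ] MvPolynomial (Fin 3) ℂ) := by
  refine ⟨invariants_eq_adjoin, E8_algebraicIndependent, ?_⟩
  have hrange : Set.range (![E8Z₁, E8Z₂, E8Z₃] : Fin 3 → MvPolynomial (Fin 11) ℂ)
      = {E8Z₁, E8Z₂, E8Z₃} := by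
    ext z
    constructor
    · rintro ⟨i, rfl⟩
      fin_cases i <;> simp
    · rintro (rfl | rfl | rfl)
      exacts [⟨0, rfl⟩, ⟨1, rfl⟩, ⟨2, rfl⟩]
  have heq : invariants wE8
      = Algebra.adjoin ℂ (Set.range (![E8Z₁, E8Z₂, E8Z₃] : Fin 3 → MvPolynomial (Fin 11) ℂ)) := by
    rw [hrange]; exact invariants_eq_adjoin
  exact ⟨(Subalgebra.equivOfEq _ _ heq).trans E8_algebraicIndependent.aevalEquiv.symm⟩
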